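/- Let K be a field and u ∈ Kˣ; set v = u². Fix an integer n ≥ 2. Let M_n be the free K-module with basis {u⃗_d}_{d ∈ ℤ}. For each residue i ∈ ℤ/nℤ define K-linear endomorphisms of M_n by: F_i(u⃗_d) = u·u⃗_{d+1} if d + i ≡ 0 (mod n) and 0 otherwise; E_i(u⃗_d) = u⁻¹·u⃗_{d−1} if d + i ≡ 1 (mod n) and 0 otherwise; K_i^{±1}(u⃗_d) = v^{±(𝟙[d+i ≡ 0 (mod n)] − 𝟙[d+i ≡ 1 (mod n)])}·u⃗_d. Then for all i, j ∈ ℤ/nℤ: (i) (v − v⁻¹)·(E_i ∘ F_j − F_j ∘ E_i) = δ_{ij}·(K_i − K_i^{−1}); (ii) any two of the K_i^{±1} commute; (iii) K_i ∘ E_j ∘ K_i^{−1} = v^{a_{ij}}·E_j and K_i ∘ F_j ∘ K_i^{−1} = v^{−a_{ij}}·F_j, where a_{ij} = 2·𝟙[i = j] − 𝟙[i = j+1] − 𝟙[i = j−1] computed in ℤ/nℤ (the entries of the affine Cartan matrix Â_{n−1}). -/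
import Mathlib


/-- The operator `F_i` on the free module with basis `{u⃗_d}_{d∈ℤ}`:
`F_i(u⃗_d) = u·u⃗_{d+1}` if `d + i ≡ 0 (mod n)`, and `0` otherwise. -/
noncomputable def FopZ {K : Type*} [Field K] (u : Kˣ) (n : ℕ) (i : ZMod n) :
    (ℤ →₀ K) →ₗ[K] (ℤ →₀ K) :=
  Finsupp.lsum K fun d =>
    if (d : ZMod n) + i = 0 then (u : K) • Finsupp.lsingle (d + 1) else 0

/-- The operator `E_i`: `E_i(u⃗_d) = u⁻¹·u⃗_{d−1}` if `d + i ≡ 1 (mod n)`, and `0` otherwise. -/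
noncomputable def EopZ {K : Type*} [Field K] (u : Kˣ) (n : ℕ) (i : ZMod n) :
    (ℤ →₀ K) →ₗ[K] (ℤ →₀ K) :=
  Finsupp.lsum K fun d =>
    if (d : ZMod n) + i = 1 then ((u⁻¹ : Kˣ) : K) • Finsupp.lsingle (d - 1) else 0

/-- The operator `K_i^s` (for `s = ±1`):
`K_i^s(u⃗_d) = v^{s·(𝟙[d+i≡0] − 𝟙[d+i≡1])}·u⃗_d`, where `v = u²`. -/
noncomputable def KopZ {K : Type*} [Field K] (u : Kˣ) (n : ℕ) (i : ZMod n) (s : ℤ) :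
    (ℤ →₀ K) →ₗ[K] (ℤ →₀ K) :=
  Finsupp.lsum K fun d =>
    ((((u ^ 2) ^ (s * ((if (d : ZMod n) + i = 0 then 1 else 0) -
        (if (d : ZMod n) + i = 1 then 1 else 0)))) : Kˣ) : K) • Finsupp.lsingle d

section
variable {K : Type*} [Field K] (u : Kˣ) (n : ℕ)

lemma F_single (i : ZMod n) (d : ℤ) (c : K) :
    FopZ u n i (Finsupp.single d c) =
      if (d : ZMod n) + i = 0 then Finsupp.single (d + 1) ((u : K) * c) else 0 := by
  rw [FopZ, Finsupp.lsum_single]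
  split_ifs <;> simp only [LinearMap.smul_apply, Finsupp.lsingle_apply,
    Finsupp.smul_single, smul_eq_mul, LinearMap.zero_apply]

lemma E_single (i : ZMod n) (d : ℤ) (c : K) :
    EopZ u n i (Finsupp.single d c) =
      if (d : ZMod n) + i = 1 then Finsupp.single (d - 1) ((u : K)⁻¹ * c) else 0 := by
  rw [EopZ, Finsupp.lsum_single]
  split_ifs <;> simp only [LinearMap.smul_apply, Finsupp.lsingle_apply,
    Finsupp.smul_single, smul_eq_mul, LinearMap.zero_apply, Units.val_inv_eq_inv_val]

lemma K_single (i : ZMod n) (s : ℤ) (d : ℤ) (c : K) :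
    KopZ u n i s (Finsupp.single d c) =
      ((u : K) ^ 2) ^ (s * ((if (d : ZMod n) + i = 0 then 1 else 0) -
        (if (d : ZMod n) + i = 1 then (1:ℤ) else 0))) • Finsupp.single d c := by
  rw [KopZ, Finsupp.lsum_single]
  simp only [LinearMap.smul_apply, Finsupp.lsingle_apply, Units.val_zpow_eq_zpow_val,
    Units.val_pow_eq_pow_val]

end

lemma EF_single {K : Type*} [Field K] (u : Kˣ) (n : ℕ) (i j : ZMod n) (d : ℤ) (c : K) :
    EopZ u n i (FopZ u n j (Finsupp.single d c)) =
      if ((d : ZMod n) + j = 0 ∧ (d : ZMod n) + i = 0) then Finsupp.single d c else 0 := by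
  rw [F_single]
  rcases eq_or_ne ((d : ZMod n) + j) 0 with hj | hj
  · rw [if_pos hj, E_single]
    have hc : (((d + 1 : ℤ) : ZMod n) + i = 1) ↔ ((d : ZMod n) + i = 0) := by
      push_cast
      constructor <;> intro h <;> linear_combination h
    split_ifs with h1 h2 h2
    · simp only [add_sub_cancel_right]
      rw [← mul_assoc, inv_mul_cancel₀ u.ne_zero, one_mul]
    · exact absurd ⟨(by assumption), hc.mp h1⟩ h2
    · exact absurd (hc.mpr h2.2) h1
    · rfl
  · rw [if_neg hj, map_zero, if_neg (fun h => hj h.1)]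

lemma FE_single {K : Type*} [Field K] (u : Kˣ) (n : ℕ) (i j : ZMod n) (d : ℤ) (c : K) :
    FopZ u n j (EopZ u n i (Finsupp.single d c)) =
      if ((d : ZMod n) + i = 1 ∧ (d : ZMod n) + j = 1) then Finsupp.single d c else 0 := by
  rw [E_single]
  rcases eq_or_ne ((d : ZMod n) + i) 1 with hi | hi
  · rw [if_pos hi, F_single]
    have hc : (((d - 1 : ℤ) : ZMod n) + j = 0) ↔ ((d : ZMod n) + j = 1) := by
      push_cast
      constructor <;> intro h <;> linear_combination h
    split_ifs with h1 h2 h2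
    · simp only [sub_add_cancel]
      rw [← mul_assoc, mul_inv_cancel₀ u.ne_zero, one_mul]
    · exact absurd ⟨(by assumption), hc.mp h1⟩ h2
    · exact absurd (hc.mpr h2.2) h1
    · rfl
  · rw [if_neg hi, map_zero, if_neg (fun h => hi h.1)]

/-- the Drinfeld–Jimbo relations hold on the fundamental representation
`𝕍_n = ⊕_{d∈ℤ} K·u⃗_d` of `U_υ(ĝl(n))` (`n ≥ 2`, `v = u²`):
(i) `(v − v⁻¹)(E_i F_j − F_j E_i) = δ_{ij}(K_i − K_i⁻¹)`;
(ii) the `K_i^{±1}` commute;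
(iii) `K_i E_j K_i⁻¹ = v^{a_{ij}} E_j` and `K_i F_j K_i⁻¹ = v^{−a_{ij}} F_j`, where
`a_{ij} = 2·𝟙[i=j] − 𝟙[i=j+1] − 𝟙[i=j−1]` in `ℤ/nℤ`. -/
theorem fundamental_rep_relations {K : Type*} [Field K] (u : Kˣ) (n : ℕ) (hn : 2 ≤ n) :
    (∀ i j : ZMod n,
      ((u : K) ^ 2 - ((u : K) ^ 2)⁻¹) •
          (EopZ u n i ∘ₗ FopZ u n j - FopZ u n j ∘ₗ EopZ u n i) =
        if i = j then KopZ u n i 1 - KopZ u n i (-1) else 0) ∧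
    (∀ i j : ZMod n, ∀ s t : ℤ, (s = 1 ∨ s = -1) → (t = 1 ∨ t = -1) →
      KopZ u n i s ∘ₗ KopZ u n j t = KopZ u n j t ∘ₗ KopZ u n i s) ∧
    (∀ i j : ZMod n,
      (KopZ u n i 1 ∘ₗ EopZ u n j ∘ₗ KopZ u n i (-1) =
        ((((u ^ 2) ^ ((2 * (if i = j then 1 else 0) - (if i = j + 1 then 1 else 0) -
            (if i = j - 1 then 1 else 0) : ℤ))) : Kˣ) : K) • EopZ u n j) ∧
      (KopZ u n i 1 ∘ₗ FopZ u n j ∘ₗ KopZ u n i (-1) =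
        ((((u ^ 2) ^ (-(2 * (if i = j then 1 else 0) - (if i = j + 1 then 1 else 0) -
            (if i = j - 1 then 1 else 0) : ℤ))) : Kˣ) : K) • FopZ u n j)) := by
  refine ⟨?_, ?_, fun i j => ⟨?_, ?_⟩⟩
  · have h01 : (0 : ZMod n) ≠ 1 := by
      haveI : Fact (1 < n) := ⟨hn⟩
      exact zero_ne_one
    have hu : (u : K) ≠ 0 := u.ne_zero
    have hv : ((u : K) ^ 2) ≠ 0 := pow_ne_zero 2 hu
    intro i j
    rcases eq_or_ne i j with hij | hij
    · subst hij
      rw [if_pos rfl]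
      refine Finsupp.lhom_ext fun d c => ?_
      simp only [LinearMap.smul_apply, LinearMap.sub_apply, LinearMap.comp_apply,
        EF_single, FE_single, K_single, and_self]
      split_ifs with h1 h2
      · rw [h1] at h2; exact absurd h2 h01
      · simp only [sub_zero, mul_one, Finsupp.smul_single, smul_eq_mul, ← Finsupp.single_sub]
        congr 1
        simp only [zpow_one, zpow_neg]
        ring
      · simp only [zero_sub, smul_neg, mul_zero, zero_sub, Finsupp.smul_single, smul_eq_mul,
          ← Finsupp.single_sub, ← Finsupp.single_neg]
        congr 1
        norm_num
        ring
      · simp only [sub_self, smul_zero, mul_zero, sub_zero, Finsupp.smul_single,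
          ← Finsupp.single_sub, zpow_zero, one_smul, sub_self]
    · rw [if_neg hij]
      refine Finsupp.lhom_ext fun d c => ?_
      simp only [LinearMap.smul_apply, LinearMap.sub_apply, LinearMap.comp_apply,
        EF_single, FE_single, LinearMap.zero_apply]
      split_ifs with h1 h2 h2
      · exact absurd (by linear_combination h1.2 - h1.1) hij
      · exact absurd (by linear_combination h1.2 - h1.1) hij
      · exact absurd (by linear_combination h2.1 - h2.2) hij
      · simp
  · intro i j s t _ _
    refine Finsupp.lhom_ext fun d c => ?_
    simp only [LinearMap.comp_apply, K_single, Finsupp.smul_single, map_smul, smul_smul]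
    rw [mul_comm]
  · refine Finsupp.lhom_ext fun d c => ?_
    simp only [LinearMap.comp_apply, LinearMap.smul_apply, K_single, map_smul, E_single,
      apply_ite (KopZ u n i 1), map_zero, smul_zero, Units.val_zpow_eq_zpow_val,
      Units.val_pow_eq_pow_val]
    rcases eq_or_ne ((d : ZMod n) + j) 1 with hdj | hdj
    · rw [if_pos hdj]
      have h0 : (((d : ZMod n) + i = 0)) ↔ i = j - 1 := by
        constructor <;> intro h <;> first | linear_combination h - hdj | linear_combination h + hdj
      have h1 : (((d : ZMod n) + i = 1)) ↔ i = j := by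
        constructor <;> intro h <;> first | linear_combination h - hdj | linear_combination h + hdj
      have h2 : ((((d - 1 : ℤ) : ZMod n) + i = 0)) ↔ i = j := by
        push_cast
        constructor <;> intro h <;> first | linear_combination h - hdj | linear_combination h + hdj
      have h3 : ((((d - 1 : ℤ) : ZMod n) + i = 1)) ↔ i = j + 1 := by
        push_cast
        constructor <;> intro h <;> first | linear_combination h - hdj | linear_combination h + hdj
      simp only [h0, h1, h2, h3, smul_smul, Finsupp.smul_single, smul_eq_mul]
      have hv : ((u : K) ^ 2) ≠ 0 := pow_ne_zero 2 u.ne_zero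
      split_ifs
      all_goals simp only [Finsupp.smul_single, smul_eq_mul, smul_zero]
      all_goals first
        | rfl
        | (congr 1; simp only [← mul_assoc, ← zpow_add₀ hv]; norm_num)
    · simp only [if_neg hdj, smul_zero]
  · refine Finsupp.lhom_ext fun d c => ?_
    simp only [LinearMap.comp_apply, LinearMap.smul_apply, K_single, map_smul, F_single,
      apply_ite (KopZ u n i 1), map_zero, smul_zero, Units.val_zpow_eq_zpow_val,
      Units.val_pow_eq_pow_val]
    rcases eq_or_ne ((d : ZMod n) + j) 0 with hdj | hdj
    · rw [if_pos hdj]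
      have h0 : (((d : ZMod n) + i = 0)) ↔ i = j := by
        constructor <;> intro h <;> first | linear_combination h - hdj | linear_combination h + hdj
      have h1 : (((d : ZMod n) + i = 1)) ↔ i = j + 1 := by
        constructor <;> intro h <;> first | linear_combination h - hdj | linear_combination h + hdj
      have h2 : ((((d + 1 : ℤ) : ZMod n) + i = 0)) ↔ i = j - 1 := by
        push_cast
        constructor <;> intro h <;> first | linear_combination h - hdj | linear_combination h + hdj
      have h3 : ((((d + 1 : ℤ) : ZMod n) + i = 1)) ↔ i = j := by
        push_cast
        constructor <;> intro h <;> first | linear_combination h - hdj | linear_combination h + hdj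
      simp only [h0, h1, h2, h3, smul_smul, Finsupp.smul_single, smul_eq_mul]
      have hv : ((u : K) ^ 2) ≠ 0 := pow_ne_zero 2 u.ne_zero
      split_ifs
      all_goals simp only [Finsupp.smul_single, smul_eq_mul, smul_zero]
      all_goals first
        | rfl
        | (congr 1; simp only [← mul_assoc, ← zpow_add₀ hv]; norm_num)
    · simp only [if_neg hdj, smul_zero]
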